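/- arXiv:1508.07594 — 4 statements merged into one kernel-verified Lean document; each statement's English description precedes it below -/
import Mathlib

section
/- Let C_1, …, C_n ⊆ ℝ^d be polyhedral cones with apex at the origin, each with nonempty interior, with pairwise disjoint interiors, and suppose there is a vector u ∈ ℝ^d with ⟨u,x⟩ > 0 for every nonzero x in every C_i. Let α_1, …, α_n ∈ ℝ and g = ∑_{i=1}^n α_i · [C_i]. If for every z ∈ ℝ^d satisfying ⟨z,x⟩ < 0 for every nonzero x in every C_i one has ∫_{ℝ^d} g(x) e^{⟨z,x⟩} dx = 0 (all these integrals converge), then α_1 = ⋯ = α_n = 0. -/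
open MeasureTheory Filter Topology RealInnerProductSpace

noncomputable section

/-- Euclidean space `ℝ^d`. -/
abbrev Euc (d : ℕ) := EuclideanSpace ℝ (Fin d)

/-- A convex polyhedron: an intersection of finitely many closed half-spaces. -/
def IsConvexPolyhedron {d : ℕ} (P : Set (Euc d)) : Prop :=
  ∃ (n : ℕ) (a : Fin n → Euc d) (b : Fin n → ℝ),
    (∀ i, a i ≠ 0) ∧ P = {x | ∀ i, ⟪a i, x⟫ ≤ b i}

/-- A generalized polyhedron: a finite union of convex polyhedra. -/
def IsGenPolyhedron {d : ℕ} (P : Set (Euc d)) : Prop :=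
  ∃ (n : ℕ) (Q : Fin n → Set (Euc d)),
    (∀ i, IsConvexPolyhedron (Q i)) ∧ P = ⋃ i, Q i

/-- A line-cone: a generalized polyhedron invariant under translation by every
multiple of some nonzero vector `u`. -/
def IsLineCone {d : ℕ} (D : Set (Euc d)) : Prop :=
  IsGenPolyhedron D ∧ ∃ u : Euc d, u ≠ 0 ∧ ∀ t : ℝ, (fun x => x + t • u) '' D = D

/-- The tangent cone of `P` at `v`: points `y = v + x` such that `v + ε • x ∈ P`
for all sufficiently small `ε > 0`. -/
def tcone {d : ℕ} (P : Set (Euc d)) (v : Euc d) : Set (Euc d) :=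
  {y | ∃ ε₀ > (0 : ℝ), ∀ ε : ℝ, 0 < ε → ε ≤ ε₀ → v + ε • (y - v) ∈ P}

/-- The real-valued indicator function of a set. -/
def ind {d : ℕ} (S : Set (Euc d)) : Euc d → ℝ := S.indicator fun _ => 1

/-- `f` agrees Lebesgue-almost everywhere with a finite real linear combination of
indicator functions of line-cones. -/
def IsLinCombOfLineCones {d : ℕ} (f : Euc d → ℝ) : Prop :=
  ∃ (k : ℕ) (α : Fin k → ℝ) (D : Fin k → Set (Euc d)),
    (∀ i, IsLineCone (D i)) ∧ f =ᵐ[volume] fun x => ∑ i, α i * ind (D i) x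

/-- `v` is an algebraic vertex of `P`: `v ∈ P` and the indicator function of the
tangent cone of `P` at `v` is not a.e. equal to a finite real linear combination of
indicator functions of line-cones. -/
def IsAlgebraicVertex {d : ℕ} (P : Set (Euc d)) (v : Euc d) : Prop :=
  v ∈ P ∧ ¬ IsLinCombOfLineCones (ind (tcone P v))

/-- The cone of all nonnegative linear combinations of the vectors `w j`. -/
def posCone {d m : ℕ} (w : Fin m → Euc d) : Set (Euc d) :=
  {x | ∃ t : Fin m → ℝ, (∀ j, 0 ≤ t j) ∧ x = ∑ j, t j • w j}

/-- A polyhedral cone with apex at the origin: all nonnegative linear combinations of a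
finite set of vectors. -/
def IsPolyhedralCone0 {d : ℕ} (C : Set (Euc d)) : Prop :=
  ∃ (m : ℕ) (w : Fin m → Euc d), C = posCone w

-- pow/factorial
lemma pow_div_factorial_le_exp (x : ℝ) (hx : 0 ≤ x) (n : ℕ) :
    x ^ n / n.factorial ≤ Real.exp x := by
  calc x ^ n / n.factorial
      ≤ ∑ i ∈ Finset.range (n+1), x ^ i / i.factorial :=
        Finset.single_le_sum (f := fun i => x ^ i / i.factorial)
          (fun i _ => by positivity) (Finset.self_mem_range_succ n)
    _ ≤ Real.exp x := Real.sum_le_exp_of_nonneg hx _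

lemma integrable_exp_neg_const_mul_norm {d : ℕ} {c : ℝ} (hc : 0 < c) :
    Integrable (fun x : Euc d => Real.exp (-(c * ‖x‖))) := by
  have h1 : Integrable (fun x : Euc d => ((1:ℝ) + ‖x‖) ^ (-((d:ℝ)+1))) :=
    integrable_one_add_norm (by simp)
  set K : ℝ := Real.exp c * ((d+1).factorial) / c ^ (d+1) with hK
  have hKpos : 0 < K := by positivity
  refine ((h1.const_mul K).mono' ?_ ?_)
  · exact (Real.continuous_exp.comp (continuous_const.mul continuous_norm).neg).aestronglyMeasurable
  · refine Filter.Eventually.of_forall fun x => ?_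
    have ht : (0:ℝ) ≤ ‖x‖ := norm_nonneg x
    have h2 : (c * (1 + ‖x‖)) ^ (d+1) / (d+1).factorial ≤ Real.exp (c * (1 + ‖x‖)) :=
      pow_div_factorial_le_exp _ (by positivity) _
    have h3 : ((1:ℝ) + ‖x‖) ^ (-((d:ℝ)+1)) = ((1 + ‖x‖) ^ (d+1))⁻¹ := by
      rw [← Real.rpow_natCast (1 + ‖x‖) (d+1), ← Real.rpow_neg (by positivity)]
      norm_num
    rw [Real.norm_eq_abs, abs_of_pos (Real.exp_pos _), h3]
    rw [Real.exp_neg]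
    rw [div_le_iff₀ (by positivity)] at h2
    have h4 : Real.exp (c * (1 + ‖x‖)) = Real.exp c * Real.exp (c * ‖x‖) := by
      rw [← Real.exp_add]; ring_nf
    have h5 : (1 + ‖x‖) ^ (d+1) ≤ K * Real.exp (c * ‖x‖) := by
      have hcp : (0:ℝ) < c ^ (d+1) := by positivity
      rw [hK]
      rw [mul_pow] at h2
      rw [h4] at h2
      rw [div_mul_eq_mul_div, le_div_iff₀ hcp]
      calc (1 + ‖x‖) ^ (d+1) * c ^ (d+1) = c ^ (d+1) * (1 + ‖x‖) ^ (d+1) := by ring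
        _ ≤ Real.exp c * Real.exp (c * ‖x‖) * (d+1).factorial := h2
        _ = Real.exp c * ↑(d+1).factorial * Real.exp (c * ‖x‖) := by ring
    rw [le_mul_inv_iff₀ (by positivity), inv_mul_eq_div, div_le_iff₀ (Real.exp_pos _)]
    linarith [h5]

lemma inner_eq_sum {d : ℕ} (x y : Euc d) : ⟪x, y⟫ = ∑ i, x i * y i := by
  simp [PiLp.inner_apply, RCLike.inner_apply, conj_trivial]
  exact Finset.sum_congr rfl fun _ _ => mul_comm _ _

lemma convex_posCone {d m : ℕ} (w : Fin m → Euc d) : Convex ℝ (posCone w) := by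
  rintro x ⟨t, ht, rfl⟩ y ⟨s, hs, rfl⟩ a b ha hb _
  refine ⟨fun j => a * t j + b * s j, fun j => add_nonneg (mul_nonneg ha (ht j)) (mul_nonneg hb (hs j)), ?_⟩
  simp only [Finset.smul_sum, smul_smul, add_smul, Finset.sum_add_distrib]

lemma measurableSet_posCone {d m : ℕ} (w : Fin m → Euc d) :
    MeasurableSet (posCone w) := by
  have h : posCone w =
      ⋃ n : ℕ, (fun t : Fin m → ℝ => ∑ j, t j • w j) '' (Set.Icc 0 (fun _ => (n:ℝ))) := by
    ext x
    constructor
    · rintro ⟨t, ht, rfl⟩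
      refine Set.mem_iUnion.2 ⟨⌈∑ j, t j⌉₊, ⟨t, ⟨?_, ?_⟩, rfl⟩⟩
      · exact ht
      · intro j
        calc t j ≤ ∑ j', t j' := Finset.single_le_sum (fun j' _ => ht j') (Finset.mem_univ j)
          _ ≤ _ := Nat.le_ceil _
    · intro hx
      obtain ⟨n, t, ⟨ht0, _⟩, rfl⟩ := Set.mem_iUnion.1 hx
      exact ⟨t, ht0, rfl⟩
  rw [h]
  refine MeasurableSet.iUnion fun n => ?_
  refine ((isCompact_Icc.image ?_).isClosed).measurableSet
  exact continuous_finset_sum _ fun j _ => (continuous_apply j).smul continuous_const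

lemma zero_mem_posCone {d m : ℕ} (w : Fin m → Euc d) : (0 : Euc d) ∈ posCone w :=
  ⟨0, fun j => le_refl 0, by simp⟩

lemma gen_mem_posCone {d m : ℕ} (w : Fin m → Euc d) (j : Fin m) : w j ∈ posCone w := by
  classical
  refine ⟨Pi.single j 1, fun j' => by by_cases h : j' = j <;> simp [Pi.single_apply, h], ?_⟩
  simp [Pi.single_apply, ite_smul]

lemma posCone_inner_bound {d m : ℕ} (w : Fin m → Euc d) (u : Euc d)
    (hw : ∀ j, w j ≠ 0 → 0 < ⟪u, w j⟫) :
    ∃ c > 0, ∀ x ∈ posCone w, c * ‖x‖ ≤ ⟪u, x⟫ := by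
  classical
  set S : Finset (Fin m) := Finset.univ.filter (fun j => w j ≠ 0) with hS
  by_cases hSne : S.Nonempty
  · set c : ℝ := S.inf' hSne (fun j => ⟪u, w j⟫ / ‖w j‖) with hc
    have hc0 : 0 < c := by
      rw [hc, Finset.lt_inf'_iff]
      intro j hj
      have hwj : w j ≠ 0 := (Finset.mem_filter.1 hj).2
      exact div_pos (hw j hwj) (norm_pos_iff.2 hwj)
    refine ⟨c, hc0, ?_⟩
    rintro x ⟨t, ht, rfl⟩
    have key : ∀ j, c * (t j * ‖w j‖) ≤ t j * ⟪u, w j⟫ := by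
      intro j
      by_cases hwj : w j = 0
      · simp [hwj]
      · have hcle : c ≤ ⟪u, w j⟫ / ‖w j‖ :=
          Finset.inf'_le _ (Finset.mem_filter.2 ⟨Finset.mem_univ j, hwj⟩)
        have : c * ‖w j‖ ≤ ⟪u, w j⟫ := by
          rw [← div_mul_cancel₀ ⟪u, w j⟫ (norm_ne_zero_iff.2 hwj)]
          exact mul_le_mul_of_nonneg_right hcle (norm_nonneg _)
        calc c * (t j * ‖w j‖) = t j * (c * ‖w j‖) := by ring
          _ ≤ t j * ⟪u, w j⟫ := mul_le_mul_of_nonneg_left this (ht j)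
    calc c * ‖∑ j, t j • w j‖ ≤ c * ∑ j, ‖t j • w j‖ :=
          mul_le_mul_of_nonneg_left (norm_sum_le _ _) hc0.le
      _ = ∑ j, c * (t j * ‖w j‖) := by
          rw [Finset.mul_sum]
          exact Finset.sum_congr rfl fun j _ => by
            rw [norm_smul, Real.norm_eq_abs, abs_of_nonneg (ht j)]
      _ ≤ ∑ j, t j * ⟪u, w j⟫ := Finset.sum_le_sum fun j _ => key j
      _ = ⟪u, ∑ j, t j • w j⟫ := by
          rw [inner_sum]
          exact Finset.sum_congr rfl fun j _ => (real_inner_smul_right _ _ _).symm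
  · refine ⟨1, one_pos, ?_⟩
    rintro x ⟨t, ht, rfl⟩
    have hwz : ∀ j, t j • w j = 0 := by
      intro j
      have : w j = 0 := by
        by_contra h
        exact hSne ⟨j, Finset.mem_filter.2 ⟨Finset.mem_univ j, h⟩⟩
      simp [this]
    simp [hwz]

def auxS {d : ℕ} (u : Euc d) (r : ℝ) (v : Fin d → ℝ) : Euc d :=
  WithLp.toLp 2 (fun k => r⁻¹ * (v k + (∑ j, u j * v j) / (r - ∑ j, u j)))

lemma auxS_apply {d : ℕ} (u : Euc d) (r : ℝ) (v : Fin d → ℝ) (k : Fin d) :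
    auxS u r v k = r⁻¹ * (v k + (∑ j, u j * v j) / (r - ∑ j, u j)) := rfl

lemma continuous_auxS {d : ℕ} (u : Euc d) (r : ℝ) : Continuous (auxS u r) := by
  have : Continuous fun v : Fin d → ℝ => (fun k => r⁻¹ * (v k + (∑ j, u j * v j) / (r - ∑ j, u j)) : Fin d → ℝ) := by
    refine continuous_pi fun k => ?_
    refine continuous_const.mul (((continuous_apply k).add (Continuous.div_const ?_ _)))
    exact continuous_finset_sum _ fun j _ => continuous_const.mul (continuous_apply j)
  exact (PiLp.continuous_toLp 2 (fun _ : Fin d => ℝ)).comp this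

lemma auxS_left_inv {d : ℕ} (u : Euc d) (r : ℝ) (hr0 : r ≠ 0) (hrσ : r ≠ ∑ j, u j)
    (x : Euc d) : auxS u r (fun k => r * x k - ⟪u, x⟫) = x := by
  have hσ : r - ∑ j, u j ≠ 0 := sub_ne_zero.2 hrσ
  ext k
  rw [auxS_apply, inner_eq_sum]
  set A : ℝ := ∑ i, u i * x i with hA
  set B : ℝ := ∑ j, u j with hB
  have hsum : ∑ j, u j * (r * x j - A) = r * A - B * A := by
    have expand : ∀ j ∈ Finset.univ, u j * (r * x j - A) = r * (u j * x j) - A * u j :=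
      fun j _ => by ring
    rw [Finset.sum_congr rfl expand, Finset.sum_sub_distrib, ← Finset.mul_sum, ← Finset.mul_sum,
      ← hA, ← hB]
    ring
  rw [hsum]
  field_simp
  ring

lemma auxS_right_inv {d : ℕ} (u : Euc d) (r : ℝ) (hr0 : r ≠ 0) (hrσ : r ≠ ∑ j, u j)
    (v : Fin d → ℝ) (k : Fin d) : r * auxS u r v k - ⟪u, auxS u r v⟫ = v k := by
  have hσ : r - ∑ j, u j ≠ 0 := sub_ne_zero.2 hrσ
  rw [inner_eq_sum]
  simp only [auxS_apply]
  set A : ℝ := ∑ i, u i * v i with hA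
  set B : ℝ := ∑ j, u j with hB
  have hsum : ∑ j, u j * (r⁻¹ * (v j + A / (r - B))) = r⁻¹ * A + r⁻¹ * (A / (r - B)) * B := by
    have expand : ∀ j ∈ Finset.univ, u j * (r⁻¹ * (v j + A / (r - B)))
        = r⁻¹ * (u j * v j) + r⁻¹ * (A / (r - B)) * u j := fun j _ => by ring
    rw [Finset.sum_congr rfl expand, Finset.sum_add_distrib, ← Finset.mul_sum, ← Finset.mul_sum,
      ← hA, ← hB]
  rw [hsum]
  field_simp
  ring

def phiHat {d : ℕ} (u : Euc d) (r : ℝ) (ψ : Euc d → ℝ) (y : Fin d → ℝ) : ℝ :=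
  if ∀ k, 0 < y k then
    ψ (auxS u r (fun k => Real.log (y k))) *
      Real.exp ⟪u, auxS u r (fun k => Real.log (y k))⟫
  else 0

lemma continuous_phiHat {d : ℕ} (u : Euc d) (r : ℝ) (hr0 : r ≠ 0) (hrσ : r ≠ ∑ j, u j)
    (ψ : Euc d → ℝ) (hψ : Continuous ψ) (hψc : HasCompactSupport ψ) :
    Continuous (phiHat u r ψ) := by
  rw [continuous_iff_continuousAt]
  intro y0
  by_cases hy0 : ∀ k, 0 < y0 k
  · have hopen : IsOpen {y : Fin d → ℝ | ∀ k, 0 < y k} := by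
      have h : {y : Fin d → ℝ | ∀ k, 0 < y k} = ⋂ k, {y | 0 < y k} := by
        ext y; simp [Set.mem_iInter]
      rw [h]
      exact isOpen_iInter_of_finite fun k => isOpen_lt continuous_const (continuous_apply k)
    have heq : (fun y => ψ (auxS u r (fun k => Real.log (y k))) *
        Real.exp ⟪u, auxS u r (fun k => Real.log (y k))⟫) =ᶠ[𝓝 y0] phiHat u r ψ := by
      filter_upwards [hopen.mem_nhds hy0] with y hy
      simp only [phiHat, if_pos hy]
    have hL : ContinuousAt (fun y : Fin d → ℝ => (fun k => Real.log (y k) : Fin d → ℝ)) y0 := by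
      apply continuousAt_pi.2
      intro k
      exact ContinuousAt.comp (x := y0) (g := Real.log) (f := fun p : Fin d → ℝ => p k) (Real.continuousAt_log (ne_of_gt (hy0 k))) ((continuous_apply k).continuousAt)
    have hx : ContinuousAt (fun y : Fin d → ℝ => auxS u r (fun k => Real.log (y k))) y0 :=
      (continuous_auxS u r).continuousAt.comp hL
    have hcont : ContinuousAt (fun y => ψ (auxS u r (fun k => Real.log (y k))) *
        Real.exp ⟪u, auxS u r (fun k => Real.log (y k))⟫) y0 := by
      refine ContinuousAt.mul (hψ.continuousAt.comp hx) ?_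
      exact (Real.continuous_exp.comp (continuous_const.inner continuous_id)).continuousAt.comp hx
    exact hcont.congr heq
  · push_neg at hy0
    obtain ⟨k0, hk0⟩ := hy0
    by_cases hT : (tsupport ψ).Nonempty
    · set h : Euc d → ℝ := fun x => Real.exp (r * x k0 - ⟪u, x⟫) with hh
      have hhcont : Continuous h := by
        refine Real.continuous_exp.comp (Continuous.sub ?_ (continuous_const.inner continuous_id))
        exact continuous_const.mul ((continuous_apply k0).comp (PiLp.continuous_ofLp 2 _))
      obtain ⟨x0, hx0T, hmin⟩ := hψc.exists_isMinOn hT hhcont.continuousOn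
      set ε : ℝ := h x0 with hε
      have hεpos : 0 < ε := Real.exp_pos _
      have hU : IsOpen {y : Fin d → ℝ | y k0 < ε} := isOpen_lt (continuous_apply k0) continuous_const
      have hzero : ∀ y ∈ {y : Fin d → ℝ | y k0 < ε}, phiHat u r ψ y = 0 := by
        intro y hy
        by_cases hpos : ∀ k, 0 < y k
        · have hψx : ψ (auxS u r (fun k => Real.log (y k))) = 0 := by
            by_contra hne
            have hmem : auxS u r (fun k => Real.log (y k)) ∈ tsupport ψ :=
              subset_tsupport ψ (by simpa [Function.mem_support] using hne)
            have hle : ε ≤ h (auxS u r (fun k => Real.log (y k))) := hmin hmem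
            rw [hh] at hle
            simp only at hle
            rw [auxS_right_inv u r hr0 hrσ, Real.exp_log (hpos k0)] at hle
            exact absurd hy (by simp [not_lt.2 hle])
          simp only [phiHat, if_pos hpos, hψx, zero_mul]
        · simp only [phiHat, if_neg hpos]
      have heq : phiHat u r ψ =ᶠ[𝓝 y0] fun _ => 0 := by
        filter_upwards [hU.mem_nhds (show y0 k0 < ε by linarith)] with y hy
        exact hzero y hy
      exact Filter.EventuallyEq.continuousAt heq
    · have hψ0 : ∀ x, ψ x = 0 := fun x =>
        image_eq_zero_of_notMem_tsupport (by rw [Set.not_nonempty_iff_eq_empty.1 hT]; exact Set.notMem_empty x)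
      have : phiHat u r ψ = fun _ => 0 := by
        funext y
        simp [phiHat, hψ0]
      rw [this]
      exact continuousAt_const

abbrev Cube (d : ℕ) : Set (Fin d → ℝ) := Set.Icc 0 1

instance cubeCompact (d : ℕ) : CompactSpace (Cube d) :=
  isCompact_iff_compactSpace.mp isCompact_Icc

def monoCM {d : ℕ} (n : Fin d → ℕ) : C(Cube d, ℝ) :=
  ⟨fun y => ∏ k, (y.1 k) ^ (n k), by
    apply continuous_finset_prod
    intro k _
    exact ((continuous_apply k).comp continuous_subtype_val).pow (n k)⟩

lemma monoCM_apply {d : ℕ} (n : Fin d → ℕ) (y : Cube d) :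
    monoCM n y = ∏ k, (y.1 k) ^ (n k) := rfl

lemma monoCM_mul {d : ℕ} (n n' : Fin d → ℕ) :
    monoCM n * monoCM n' = monoCM (n + n') := by
  ext y
  simp [monoCM, pow_add, Finset.prod_mul_distrib]

lemma monoCM_zero {d : ℕ} : (monoCM (0 : Fin d → ℕ)) = 1 := by
  ext y; simp [monoCM]

def monoAlg (d : ℕ) : Subalgebra ℝ C(Cube d, ℝ) :=
  { Submodule.span ℝ (Set.range (monoCM (d := d))) with
    mul_mem' := by
      intro a b ha hb
      have hle : (Submodule.span ℝ (Set.range (monoCM (d := d)))) *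
          (Submodule.span ℝ (Set.range (monoCM (d := d)))) ≤
          Submodule.span ℝ (Set.range (monoCM (d := d))) := by
        rw [Submodule.span_mul_span]
        refine Submodule.span_le.2 ?_
        rintro x hx
        rw [Set.mem_mul] at hx
        obtain ⟨p, ⟨n, rfl⟩, q, ⟨n', rfl⟩, rfl⟩ := hx
        exact Submodule.subset_span ⟨n + n', (monoCM_mul n n').symm⟩
      exact hle (Submodule.mul_mem_mul ha hb)
    one_mem' := Submodule.subset_span ⟨0, monoCM_zero⟩
    algebraMap_mem' := by
      intro c
      have h : algebraMap ℝ C(Cube d, ℝ) c = c • (1 : C(Cube d, ℝ)) :=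
        Algebra.algebraMap_eq_smul_one c
      rw [h]
      exact Submodule.smul_mem _ c (monoCM_zero ▸ Submodule.subset_span ⟨0, rfl⟩)
  }

lemma mem_monoAlg {d : ℕ} (p : C(Cube d, ℝ)) :
    p ∈ monoAlg d ↔ p ∈ Submodule.span ℝ (Set.range (monoCM (d := d))) := Iff.rfl

lemma monoAlg_separatesPoints (d : ℕ) : (monoAlg d).SeparatesPoints := by
  intro y y' hne
  have hk : ∃ k, y.1 k ≠ y'.1 k := by
    by_contra h
    push_neg at h
    exact hne (Subtype.ext (funext h))
  obtain ⟨k, hk⟩ := hk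
  refine ⟨_, ⟨monoCM (Pi.single k 1), Submodule.subset_span ⟨Pi.single k 1, rfl⟩, rfl⟩, ?_⟩
  have hcoord : ∀ w : Cube d, monoCM (Pi.single k 1) w = w.1 k := by
    intro w
    rw [monoCM_apply]
    rw [Finset.prod_eq_single k (fun j _ hj => by simp [Pi.single_apply, hj]) (by simp)]
    simp
  simpa [hcoord] using hk


lemma ind_nonneg {d : ℕ} (S : Set (Euc d)) (x : Euc d) : 0 ≤ ind S x :=
  Set.indicator_nonneg (fun _ _ => zero_le_one) x

lemma ind_le_one {d : ℕ} (S : Set (Euc d)) (x : Euc d) : ind S x ≤ 1 := by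
  unfold ind; by_cases h : x ∈ S <;> simp [h]


/-- If internally disjoint full-dimensional polyhedral cones lying in
an open half-space have a vanishing Fourier–Laplace transform of a linear combination of
their indicators, then all the coefficients vanish. -/
theorem statement_11 {d : ℕ} (N : ℕ) (C : Fin N → Set (Euc d))
    (hC : ∀ i, IsPolyhedralCone0 (C i))
    (hint : ∀ i, (interior (C i)).Nonempty)
    (hdisj : ∀ i j, i ≠ j → interior (C i) ∩ interior (C j) = ∅)
    (u : Euc d) (hu : ∀ i, ∀ x ∈ C i, x ≠ 0 → 0 < ⟪u, x⟫)
    (α : Fin N → ℝ)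
    (h0 : ∀ z : Euc d, (∀ i, ∀ x ∈ C i, x ≠ 0 → ⟪z, x⟫ < 0) →
      ∫ x, (∑ i, α i * ind (C i) x) * Real.exp ⟪z, x⟫ = 0) :
    ∀ i, α i = 0 := by
  classical
  intro i0
  have hmeas : ∀ i, MeasurableSet (C i) := fun i => by
    obtain ⟨m, w, hw⟩ := hC i; rw [hw]; exact measurableSet_posCone w
  have hconv : ∀ i, Convex ℝ (C i) := fun i => by
    obtain ⟨m, w, hw⟩ := hC i; rw [hw]; exact convex_posCone w
  have hcone_bound : ∀ i, ∃ c > 0, ∀ x ∈ C i, c * ‖x‖ ≤ ⟪u, x⟫ := by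
    intro i
    obtain ⟨m, w, hw⟩ := hC i
    have := posCone_inner_bound w u fun j hj => hu i (w j) (hw ▸ gen_mem_posCone w j) hj
    rw [hw]; exact this
  choose cc hcc0 hccb using hcone_bound
  set c : ℝ := Finset.univ.inf' ⟨i0, Finset.mem_univ i0⟩ cc with hcdef
  have hc0 : 0 < c := (Finset.lt_inf'_iff _).2 fun i _ => hcc0 i
  have hcb : ∀ i, ∀ x ∈ C i, c * ‖x‖ ≤ ⟪u, x⟫ := by
    intro i x hx
    calc c * ‖x‖ ≤ cc i * ‖x‖ :=
          mul_le_mul_of_nonneg_right (Finset.inf'_le _ (Finset.mem_univ i)) (norm_nonneg x)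
      _ ≤ _ := hccb i x hx
  obtain ⟨r, hr0, hrc, hrσ⟩ : ∃ r : ℝ, 0 < r ∧ r < c ∧ r ≠ ∑ j, u j := by
    by_cases h : (∑ j, u j) = c / 2
    · exact ⟨c / 3, by positivity, by linarith, by rw [h]; intro hh; linarith⟩
    · exact ⟨c / 2, by positivity, by linarith, fun hh => h hh.symm⟩
  set z : Fin d → Euc d := fun k => -u + r • EuclideanSpace.single k (1 : ℝ) with hzdef
  have hzk_inner : ∀ (k) (x : Euc d), ⟪z k, x⟫ = r * x k - ⟪u, x⟫ := by
    intro k x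
    rw [hzdef]
    simp only [inner_add_left, inner_neg_left, real_inner_smul_left,
      EuclideanSpace.inner_single_left, conj_trivial]
    ring
  have hcoord_le : ∀ (x : Euc d) (k), x k ≤ ‖x‖ := by
    intro x k
    have h1 : ⟪EuclideanSpace.single k (1 : ℝ), x⟫ = x k := by
      rw [EuclideanSpace.inner_single_left]; simp
    rw [← h1]
    calc ⟪EuclideanSpace.single k (1 : ℝ), x⟫ ≤ ‖EuclideanSpace.single k (1 : ℝ)‖ * ‖x‖ :=
          real_inner_le_norm _ _
      _ = ‖x‖ := by rw [EuclideanSpace.norm_single]; simp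
  have hzneg : ∀ (k) (i), ∀ x ∈ C i, x ≠ 0 → ⟪z k, x⟫ < 0 := by
    intro k i x hx hx0
    rw [hzk_inner]
    have h1 : r * x k ≤ r * ‖x‖ := mul_le_mul_of_nonneg_left (hcoord_le x k) hr0.le
    have h2 : c * ‖x‖ ≤ ⟪u, x⟫ := hcb i x hx
    have h3 : 0 < ‖x‖ := norm_pos_iff.2 hx0
    nlinarith
  -- continue
  set gs : Euc d → ℝ := fun x => ∑ i, α i * ind (C i) x with hgs
  have hgs_meas : Measurable gs := by
    apply Finset.measurable_sum
    intro i _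
    exact (measurable_const.indicator (hmeas i)).const_mul (α i)
  have hproj_mem : ∀ x : Euc d, (fun k => min (Real.exp ⟪z k, x⟫) 1) ∈ Cube d := by
    intro x
    rw [Set.mem_Icc]
    constructor
    · intro k
      exact le_min (Real.exp_pos _).le zero_le_one
    · intro k
      exact min_le_right _ _
  set proj : Euc d → Cube d := fun x => ⟨fun k => min (Real.exp ⟪z k, x⟫) 1, hproj_mem x⟩
    with hprojdef
  have hproj_cont : Continuous proj := by
    refine Continuous.subtype_mk ?_ _
    refine continuous_pi fun k => Continuous.min ?_ continuous_const
    exact Real.continuous_exp.comp (continuous_const.inner continuous_id)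
  have hgsupp : ∀ x, gs x ≠ 0 → ∃ i, x ∈ C i := by
    intro x hx
    by_contra h
    push_neg at h
    refine hx ?_
    simp only [hgs]
    refine Finset.sum_eq_zero fun i _ => ?_
    have : ind (C i) x = 0 := Set.indicator_of_notMem (h i) _
    rw [this, mul_zero]
  have hKle : ∀ x, (∃ i, x ∈ C i) → ∀ k, ⟪z k, x⟫ ≤ 0 := by
    rintro x ⟨i, hxC⟩ k
    by_cases hx0 : x = 0
    · rw [hx0, inner_zero_right]
    · exact (hzneg k i x hxC hx0).le
  set A0 : ℝ := ∑ i, |α i| with hA0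
  set Dg : Euc d → ℝ := fun x => (∑ i, |α i| * ind (C i) x) * Real.exp (-(c * ‖x‖)) with hDgdef
  have hDg_nonneg : ∀ x, 0 ≤ Dg x := by
    intro x
    refine mul_nonneg (Finset.sum_nonneg fun i _ => mul_nonneg (abs_nonneg _) (ind_nonneg _ _))
      (Real.exp_pos _).le
  have hDg_int : Integrable Dg := by
    have heq : Dg = fun x => ∑ i, |α i| *
        Set.indicator (C i) (fun y => Real.exp (-(c * ‖y‖))) x := by
      funext x
      rw [hDgdef]
      simp only [Finset.sum_mul]
      refine Finset.sum_congr rfl fun i _ => ?_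
      by_cases h : x ∈ C i <;> simp [ind, h, mul_assoc]
    rw [heq]
    refine integrable_finset_sum _ fun i _ => ?_
    exact ((integrable_exp_neg_const_mul_norm hc0).indicator (hmeas i)).const_mul _
  have hG_bound : ∀ x, |gs x * Real.exp ⟪-u, x⟫| ≤ Dg x := by
    intro x
    rw [abs_mul, abs_of_pos (Real.exp_pos _)]
    have h1 : |gs x| ≤ ∑ i, |α i| * ind (C i) x := by
      simp only [hgs]
      refine le_trans (Finset.abs_sum_le_sum_abs _ _) ?_
      refine Finset.sum_le_sum fun i _ => ?_
      rw [abs_mul, abs_of_nonneg (ind_nonneg _ _)]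
    by_cases hx : ∃ i, x ∈ C i
    · obtain ⟨i, hxC⟩ := hx
      have h2 : Real.exp ⟪-u, x⟫ ≤ Real.exp (-(c * ‖x‖)) := by
        apply Real.exp_le_exp.2
        rw [inner_neg_left]
        linarith [hcb i x hxC]
      calc |gs x| * Real.exp ⟪-u, x⟫
          ≤ (∑ i, |α i| * ind (C i) x) * Real.exp ⟪-u, x⟫ :=
            mul_le_mul_of_nonneg_right h1 (Real.exp_pos _).le
        _ ≤ (∑ i, |α i| * ind (C i) x) * Real.exp (-(c * ‖x‖)) :=
            mul_le_mul_of_nonneg_left h2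
              (Finset.sum_nonneg fun i _ => mul_nonneg (abs_nonneg _) (ind_nonneg _ _))
    · push_neg at hx
      have h3 : gs x = 0 := by
        simp only [hgs]
        refine Finset.sum_eq_zero fun i _ => ?_
        have h4 : ind (C i) x = 0 := Set.indicator_of_notMem (hx i) _
        rw [h4, mul_zero]
      rw [h3, abs_zero, zero_mul]
      exact hDg_nonneg x
  have hint_f : ∀ f : C(Cube d, ℝ),
      Integrable (fun x => f (proj x) * (gs x * Real.exp ⟪-u, x⟫)) := by
    intro f
    refine (hDg_int.const_mul ‖f‖).mono' ?_ ?_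
    · refine AEStronglyMeasurable.mul ?_ ?_
      · exact (f.continuous.comp hproj_cont).aestronglyMeasurable
      · refine (hgs_meas.mul ?_).aestronglyMeasurable
        exact (Real.continuous_exp.comp (continuous_const.inner continuous_id)).measurable
    · refine Filter.Eventually.of_forall fun x => ?_
      rw [norm_mul]
      refine mul_le_mul (f.norm_coe_le_norm (proj x)) ?_ (norm_nonneg _) (norm_nonneg f)
      rw [Real.norm_eq_abs]
      exact hG_bound x
  have hLmono : ∀ n : Fin d → ℕ,
      ∫ x, (monoCM n) (proj x) * (gs x * Real.exp ⟪-u, x⟫) = 0 := by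
    intro n
    set zn : Euc d := -u + ∑ k, (n k : ℝ) • z k with hzn
    have hzn_inner : ∀ x : Euc d, ⟪zn, x⟫ = ⟪-u, x⟫ + ∑ k, (n k : ℝ) * ⟪z k, x⟫ := by
      intro x
      rw [hzn, inner_add_left, sum_inner]
      congr 1
      exact Finset.sum_congr rfl fun k _ => real_inner_smul_left _ _ _
    have hadm : ∀ i, ∀ x ∈ C i, x ≠ 0 → ⟪zn, x⟫ < 0 := by
      intro i x hx hx0
      rw [hzn_inner]
      have h1 : ∑ k, (n k : ℝ) * ⟪z k, x⟫ ≤ 0 :=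
        Finset.sum_nonpos fun k _ =>
          mul_nonpos_of_nonneg_of_nonpos (Nat.cast_nonneg _) (hzneg k i x hx hx0).le
      have h2 : ⟪-u, x⟫ < 0 := by
        rw [inner_neg_left]
        linarith [hu i x hx hx0]
      linarith
    have h00 := h0 zn hadm
    have hpt : ∀ x : Euc d,
        (monoCM n) (proj x) * (gs x * Real.exp ⟪-u, x⟫)
          = (∑ i, α i * ind (C i) x) * Real.exp ⟪zn, x⟫ := by
      intro x
      have hgsx : (∑ i, α i * ind (C i) x) = gs x := rfl
      rw [hgsx]
      by_cases hgx : gs x = 0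
      · simp [hgx]
      · have hkle := hKle x (hgsupp x hgx)
        have hmono : (monoCM n) (proj x) = Real.exp (∑ k, (n k : ℝ) * ⟪z k, x⟫) := by
          rw [monoCM_apply, Real.exp_sum]
          refine Finset.prod_congr rfl fun k _ => ?_
          show (min (Real.exp ⟪z k, x⟫) 1) ^ (n k) = Real.exp ((n k : ℝ) * ⟪z k, x⟫)
          rw [min_eq_left (Real.exp_le_one_iff.2 (hkle k)), ← Real.exp_nat_mul]
        rw [hmono, hzn_inner x, Real.exp_add]
        ring
    calc ∫ x, (monoCM n) (proj x) * (gs x * Real.exp ⟪-u, x⟫)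
        = ∫ x, (∑ i, α i * ind (C i) x) * Real.exp ⟪zn, x⟫ := by
          congr 1
          funext x
          exact hpt x
      _ = 0 := h00
  have hLspan : ∀ p : C(Cube d, ℝ), p ∈ Submodule.span ℝ (Set.range (monoCM (d := d))) →
      ∫ x, p (proj x) * (gs x * Real.exp ⟪-u, x⟫) = 0 := by
    intro p hp
    induction hp using Submodule.span_induction with
    | mem q hq =>
        obtain ⟨n, rfl⟩ := hq
        exact hLmono n
    | zero => simp
    | add q q' hq hq' ihq ihq' =>
        have heq : (fun x => (q + q') (proj x) * (gs x * Real.exp ⟪-u, x⟫))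
            = fun x => q (proj x) * (gs x * Real.exp ⟪-u, x⟫)
              + q' (proj x) * (gs x * Real.exp ⟪-u, x⟫) := by
          funext x
          rw [ContinuousMap.add_apply]
          ring
        rw [heq, integral_add (hint_f q) (hint_f q'), ihq, ihq', add_zero]
    | smul a q hq ihq =>
        have heq : (fun x => (a • q) (proj x) * (gs x * Real.exp ⟪-u, x⟫))
            = fun x => a * (q (proj x) * (gs x * Real.exp ⟪-u, x⟫)) := by
          funext x
          rw [ContinuousMap.smul_apply, smul_eq_mul]
          ring
        rw [heq, integral_const_mul, ihq, mul_zero]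
  set I : ℝ := ∫ x, Dg x with hI
  have hI0 : 0 ≤ I := integral_nonneg hDg_nonneg
  have hLall : ∀ f : C(Cube d, ℝ),
      ∫ x, f (proj x) * (gs x * Real.exp ⟪-u, x⟫) = 0 := by
    intro f
    have key : ∀ ε > (0:ℝ), |∫ x, f (proj x) * (gs x * Real.exp ⟪-u, x⟫)| ≤ ε * I := by
      intro ε hε
      obtain ⟨p, hp⟩ := ContinuousMap.exists_mem_subalgebra_near_continuousMap_of_separatesPoints
        (monoAlg d) (monoAlg_separatesPoints d) f ε hε
      have hp0 : ∫ x, (p : C(Cube d, ℝ)) (proj x) * (gs x * Real.exp ⟪-u, x⟫) = 0 :=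
        hLspan _ p.2
      have hsub : ∫ x, ((p : C(Cube d, ℝ)) - f) (proj x) * (gs x * Real.exp ⟪-u, x⟫)
          = - ∫ x, f (proj x) * (gs x * Real.exp ⟪-u, x⟫) := by
        have heq : (fun x => ((p : C(Cube d, ℝ)) - f) (proj x) * (gs x * Real.exp ⟪-u, x⟫))
            = fun x => (p : C(Cube d, ℝ)) (proj x) * (gs x * Real.exp ⟪-u, x⟫)
              - f (proj x) * (gs x * Real.exp ⟪-u, x⟫) := by
          funext x
          rw [ContinuousMap.sub_apply]
          ring
        rw [heq, integral_sub (hint_f _) (hint_f f), hp0, zero_sub]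
      have hbound : |∫ x, ((p : C(Cube d, ℝ)) - f) (proj x) * (gs x * Real.exp ⟪-u, x⟫)|
          ≤ ε * I := by
        have h1 : ∀ x, ‖((p : C(Cube d, ℝ)) - f) (proj x) * (gs x * Real.exp ⟪-u, x⟫)‖
            ≤ ε * Dg x := by
          intro x
          rw [norm_mul]
          refine mul_le_mul ?_ ?_ (norm_nonneg _) hε.le
          · exact le_trans (ContinuousMap.norm_coe_le_norm _ (proj x)) hp.le
          · rw [Real.norm_eq_abs]
            exact hG_bound x
        have h2 := norm_integral_le_of_norm_le (hDg_int.const_mul ε)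
          (Filter.Eventually.of_forall h1)
        rw [Real.norm_eq_abs] at h2
        rwa [integral_const_mul] at h2
      rw [hsub, abs_neg] at hbound
      exact hbound
    by_contra hne
    set J : ℝ := |∫ x, f (proj x) * (gs x * Real.exp ⟪-u, x⟫)| with hJ
    have hJ0 : 0 < J := abs_pos.2 hne
    have hk := key (J / (2 * (I + 1))) (by positivity)
    have hlt : J / (2 * (I + 1)) * I < J := by
      rw [div_mul_eq_mul_div, div_lt_iff₀ (by positivity)]
      nlinarith
    linarith
  have hloc : LocallyIntegrable gs volume := by
    rw [locallyIntegrable_iff]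
    intro K hK
    have h1 : IntegrableOn (fun _ : Euc d => A0) K volume :=
      integrableOn_const hK.measure_lt_top.ne
    refine h1.mono' hgs_meas.aestronglyMeasurable.restrict ?_
    refine ae_restrict_of_ae (Filter.Eventually.of_forall fun x => ?_)
    rw [Real.norm_eq_abs]
    simp only [hA0]
    refine le_trans (Finset.abs_sum_le_sum_abs _ _) ?_
    refine Finset.sum_le_sum fun i _ => ?_
    rw [abs_mul, abs_of_nonneg (ind_nonneg _ _)]
    calc |α i| * ind (C i) x ≤ |α i| * 1 :=
          mul_le_mul_of_nonneg_left (ind_le_one _ _) (abs_nonneg _)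
      _ = |α i| := mul_one _
  have hae : ∀ᵐ x, gs x = 0 := by
    apply ae_eq_zero_of_integral_contDiff_smul_eq_zero hloc
    intro ψ hψdiff hψsupp
    set f : C(Cube d, ℝ) := ⟨fun y => phiHat u r ψ y.1,
      (continuous_phiHat u r hr0.ne' hrσ ψ hψdiff.continuous hψsupp).comp
        continuous_subtype_val⟩ with hf
    have hpt : ∀ x, ψ x • gs x = f (proj x) * (gs x * Real.exp ⟪-u, x⟫) := by
      intro x
      by_cases hgx : gs x = 0
      · rw [hgx, smul_zero, zero_mul, mul_zero]
      · have hkle := hKle x (hgsupp x hgx)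
        have hposy : ∀ k, 0 < min (Real.exp ⟪z k, x⟫) 1 :=
          fun k => lt_min (Real.exp_pos _) one_pos
        have hlog : (fun k => Real.log (min (Real.exp ⟪z k, x⟫) 1))
            = fun k => r * x k - ⟪u, x⟫ := by
          funext k
          rw [min_eq_left (Real.exp_le_one_iff.2 (hkle k)), Real.log_exp, hzk_inner]
        have hS : auxS u r (fun k => Real.log (min (Real.exp ⟪z k, x⟫) 1)) = x := by
          rw [hlog]
          exact auxS_left_inv u r hr0.ne' hrσ x
        show ψ x • gs x = phiHat u r ψ (fun k => min (Real.exp ⟪z k, x⟫) 1)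
          * (gs x * Real.exp ⟪-u, x⟫)
        rw [phiHat, if_pos hposy, hS, inner_neg_left, smul_eq_mul, Real.exp_neg]
        field_simp
    calc ∫ x, ψ x • gs x = ∫ x, f (proj x) * (gs x * Real.exp ⟪-u, x⟫) := by
          congr 1
          funext x
          exact hpt x
      _ = 0 := hLall f
  -- final: use a ball inside interior (C i0)
  obtain ⟨x0, hx0⟩ := hint i0
  obtain ⟨ρ, hρ0, hball⟩ := Metric.isOpen_iff.1 isOpen_interior x0 hx0
  set B : Set (Euc d) := Metric.ball x0 ρ with hB
  have hBmeas : MeasurableSet B := measurableSet_ball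
  have hBfin : volume B < ⊤ := measure_ball_lt_top
  have h1 : ∫ x in B, gs x = 0 :=
    integral_eq_zero_of_ae (ae_restrict_of_ae hae)
  have hindint : ∀ i, IntegrableOn (fun x => α i * ind (C i) x) B volume := by
    intro i
    have h2 : IntegrableOn (fun _ : Euc d => |α i|) B volume :=
      integrableOn_const hBfin.ne
    refine h2.mono' ?_ ?_
    · exact ((measurable_const.indicator (hmeas i)).const_mul (α i)).aestronglyMeasurable.restrict
    · refine ae_restrict_of_ae (Filter.Eventually.of_forall fun x => ?_)
      rw [Real.norm_eq_abs, abs_mul, abs_of_nonneg (ind_nonneg _ _)]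
      calc |α i| * ind (C i) x ≤ |α i| * 1 :=
            mul_le_mul_of_nonneg_left (ind_le_one _ _) (abs_nonneg _)
        _ = _ := mul_one _
  have h2 : ∫ x in B, gs x = ∑ i, α i * (volume (C i ∩ B)).toReal := by
    simp only [hgs]
    rw [integral_finset_sum _ fun i _ => hindint i]
    refine Finset.sum_congr rfl fun i _ => ?_
    have h3 : ∫ x in B, α i * ind (C i) x = α i * ∫ x in B, ind (C i) x :=
      integral_const_mul (α i) _
    rw [h3]
    congr 1
    show ∫ x in B, Set.indicator (C i) (fun _ => (1:ℝ)) x = (volume (C i ∩ B)).toReal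
    rw [integral_indicator (hmeas i)]
    rw [Measure.restrict_restrict (hmeas i)]
    rw [setIntegral_const]
    simp
    rfl
  have hnull : ∀ i, i ≠ i0 → volume (C i ∩ B) = 0 := by
    intro i hne
    refine measure_mono_null ?_ ((hconv i).addHaar_frontier volume)
    rintro x ⟨hxC, hxB⟩
    constructor
    · exact subset_closure hxC
    · intro hxint
      have : x ∈ interior (C i) ∩ interior (C i0) := ⟨hxint, hball hxB⟩
      rw [hdisj i i0 hne] at this
      exact this
  have hfull : volume (C i0 ∩ B) = volume B := by
    congr 1
    refine Set.inter_eq_self_of_subset_right ?_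
    exact fun x hx => interior_subset (hball hx)
  have h4 : α i0 * (volume B).toReal = 0 := by
    have h5 : ∑ i, α i * (volume (C i ∩ B)).toReal = α i0 * (volume B).toReal := by
      rw [Finset.sum_eq_single i0]
      · rw [hfull]
      · intro i _ hne
        rw [hnull i hne]
        simp
      · intro h
        exact absurd (Finset.mem_univ i0) h
    rw [← h5, ← h2, h1]
  have h6 : (volume B).toReal ≠ 0 := by
    refine ne_of_gt ?_
    rw [ENNReal.toReal_pos_iff]
    exact ⟨Metric.measure_ball_pos volume x0 hρ0, hBfin⟩
  exact (mul_eq_zero.1 h4).resolve_right h6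
end
end

section
/- Let w_1, …, w_d ∈ ℝ^d be linearly independent and let v ∈ ℝ^d satisfy ⟨v,w_j⟩ ≠ 0 for every j. Define w*_j = w_j if ⟨v,w_j⟩ > 0 and w*_j = −w_j if ⟨v,w_j⟩ < 0, and let C = pos{w_1,…,w_d} and C* = pos{w*_1,…,w*_d} be the simplicial cones generated by these vectors. Then there exist ε ∈ {−1,1}, coefficients ε_1, …, ε_d ∈ {−1,0,1}, and line-cones D_1, …, D_d such that [C] = ε·[C*] + ∑_{i=1}^d ε_i·[D_i] at Lebesgue-almost every point of ℝ^d. -/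
open MeasureTheory Filter Topology RealInnerProductSpace

noncomputable section

lemma reprVec {d : ℕ} (b : Module.Basis (Fin d) ℝ (Euc d)) (j : Fin d) :
    ∃ y : Euc d, y ≠ 0 ∧ ∀ x, ⟪y, x⟫ = b.repr x j := by
  refine ⟨(InnerProductSpace.toDual ℝ (Euc d)).symm
      (LinearMap.toContinuousLinearMap (b.coord j)), fun h => ?_, fun x => ?_⟩
  · have h2 := InnerProductSpace.toDual_symm_apply (𝕜 := ℝ) (E := Euc d)
      (x := b j) (y := LinearMap.toContinuousLinearMap (b.coord j))
    rw [h] at h2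
    simp [Module.Basis.coord_apply] at h2
  · rw [InnerProductSpace.toDual_symm_apply]
    simp [Module.Basis.coord_apply]

lemma isLineCone_D {d : ℕ} (u : Fin d → Euc d) (hu : LinearIndependent ℝ u)
    (b : Module.Basis (Fin d) ℝ (Euc d)) (hb : ∀ j, b j = u j) (a : Fin d) :
    IsLineCone {x : Euc d | ∀ j, j ≠ a → 0 ≤ b.repr x j} := by
  choose y hy0 hy using fun j => reprVec b j
  constructor
  · refine ⟨1, fun _ => {x : Euc d | ∀ j, j ≠ a → 0 ≤ b.repr x j}, fun _ => ?_, by rw [Set.iUnion_const]⟩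
    classical
    set ι := {j : Fin d // j ≠ a}
    refine ⟨Fintype.card ι, fun i => -(y ((Fintype.equivFin ι).symm i).1), fun _ => 0,
      fun i => ?_, ?_⟩
    · simp [hy0]
    · ext x
      simp only [Set.mem_setOf_eq]
      constructor
      · intro h i
        rw [inner_neg_left, hy]
        have := h ((Fintype.equivFin ι).symm i).1 ((Fintype.equivFin ι).symm i).2
        linarith
      · intro h j hj
        have := h ((Fintype.equivFin ι) ⟨j, hj⟩)
        rw [inner_neg_left, hy] at this
        simp at this
        linarith
  · refine ⟨u a, hu.ne_zero a, fun t => ?_⟩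
    have key : ∀ (s : ℝ) (x : Euc d) (j : Fin d), j ≠ a →
        b.repr (x + s • u a) j = b.repr x j := by
      intro s x j hj
      rw [← hb a]
      simp [Finsupp.single_apply, hj, Ne.symm hj]
    ext x
    simp only [Set.mem_image, Set.mem_setOf_eq]
    constructor
    · rintro ⟨z, hz, rfl⟩ j hj
      rw [key t z j hj]; exact hz j hj
    · intro hx
      refine ⟨x - t • u a, fun j hj => ?_, by abel⟩
      have : x - t • u a = x + (-t) • u a := by module
      rw [this, key (-t) x j hj]
      exact hx j hj

lemma repr_sum_eq {d : ℕ} (u : Fin d → Euc d) (b : Module.Basis (Fin d) ℝ (Euc d))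
    (hb : ∀ j, b j = u j) (c : Fin d → ℝ) (j : Fin d) :
    b.repr (∑ i, c i • u i) j = c j := by
  have h : (∑ i, c i • u i) = ∑ i, c i • b i := by simp [hb]
  rw [h, b.repr_sum_self]

lemma mem_posCone_iff {d : ℕ} (u : Fin d → Euc d) (b : Module.Basis (Fin d) ℝ (Euc d))
    (hb : ∀ j, b j = u j) (x : Euc d) :
    x ∈ posCone u ↔ ∀ j, 0 ≤ b.repr x j := by
  constructor
  · rintro ⟨t, ht, rfl⟩ j
    rw [repr_sum_eq u b hb]; exact ht j
  · intro h
    refine ⟨fun j => b.repr x j, h, ?_⟩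
    conv_lhs => rw [← b.sum_repr x]
    simp [hb]

lemma mem_posCone_flip_iff {d : ℕ} (u : Fin d → Euc d) (b : Module.Basis (Fin d) ℝ (Euc d))
    (hb : ∀ j, b j = u j) (a : Fin d) (x : Euc d) :
    x ∈ posCone (Function.update u a (-(u a))) ↔
      (∀ j, j ≠ a → 0 ≤ b.repr x j) ∧ b.repr x a ≤ 0 := by
  constructor
  · rintro ⟨t, ht, rfl⟩
    have h : (∑ j, t j • Function.update u a (-(u a)) j)
        = ∑ j, (if j = a then -t j else t j) • u j := by
      refine Finset.sum_congr rfl fun j _ => ?_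
      by_cases hj : j = a
      · subst hj; simp [Function.update_self, smul_neg, neg_smul]
      · simp [Function.update_of_ne hj, hj]
    rw [h]
    constructor
    · intro j hj; rw [repr_sum_eq u b hb]; simp [hj]; exact ht j
    · rw [repr_sum_eq u b hb]; simp; exact ht a
  · rintro ⟨h1, h2⟩
    refine ⟨fun j => if j = a then -(b.repr x a) else b.repr x j, ?_, ?_⟩
    · intro j
      by_cases hj : j = a
      · simp [hj, neg_nonneg, h2]
      · simp [hj, h1 j hj]
    · have h : (∑ j, (if j = a then -(b.repr x a) else b.repr x j) •
          Function.update u a (-(u a)) j) = ∑ j, b.repr x j • u j := by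
        refine Finset.sum_congr rfl fun j _ => ?_
        by_cases hj : j = a
        · subst hj; simp [Function.update_self, smul_neg, neg_smul]
        · simp [Function.update_of_ne hj, hj]
      rw [h]
      conv_lhs => rw [← b.sum_repr x]
      simp [hb]


lemma flip_one {d : ℕ} (u : Fin d → Euc d) (hu : LinearIndependent ℝ u) (a : Fin d) :
    ∃ D : Set (Euc d), IsLineCone D ∧
      ind (posCone u) =ᵐ[volume] fun x =>
        -(ind (posCone (Function.update u a (-(u a)))) x) + ind D x := by
  haveI : Nonempty (Fin d) := ⟨a⟩
  have hcard : Fintype.card (Fin d) = Module.finrank ℝ (Euc d) := by simp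
  set b := basisOfLinearIndependentOfCardEqFinrank hu hcard with hbdef
  have hb : ∀ j, b j = u j := fun j =>
    congrFun (coe_basisOfLinearIndependentOfCardEqFinrank hu hcard) j
  refine ⟨{x : Euc d | ∀ j, j ≠ a → 0 ≤ b.repr x j}, isLineCone_D u hu b hb a, ?_⟩
  have hZ : volume {x : Euc d | b.repr x a = 0} = 0 := by
    have h : {x : Euc d | b.repr x a = 0} = (LinearMap.ker (b.coord a) : Set (Euc d)) := by
      ext x; simp [LinearMap.mem_ker, Module.Basis.coord_apply]
    rw [h]
    apply Measure.addHaar_submodule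
    intro hk
    have h2 : b a ∈ LinearMap.ker (b.coord a) := hk ▸ Submodule.mem_top
    simp [LinearMap.mem_ker, Module.Basis.coord_apply] at h2
  have hae : ∀ᵐ x ∂(volume : Measure (Euc d)), b.repr x a ≠ 0 := by
    rw [ae_iff]
    simpa using hZ
  classical
  filter_upwards [hae] with x hr
  have e1 : x ∈ posCone u ↔ ∀ j, 0 ≤ b.repr x j := mem_posCone_iff u b hb x
  have e2 := mem_posCone_flip_iff u b hb a x
  have v1 : ind (posCone u) x = if (∀ j, 0 ≤ b.repr x j) then 1 else 0 := by
    simp only [ind]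
    by_cases h : ∀ j, 0 ≤ b.repr x j
    · rw [Set.indicator_of_mem (e1.mpr h), if_pos h]
    · rw [Set.indicator_of_notMem (fun hm => h (e1.mp hm)), if_neg h]
  have v2 : ind (posCone (Function.update u a (-(u a)))) x =
      if ((∀ j, j ≠ a → 0 ≤ b.repr x j) ∧ b.repr x a ≤ 0) then 1 else 0 := by
    simp only [ind]
    by_cases h : (∀ j, j ≠ a → 0 ≤ b.repr x j) ∧ b.repr x a ≤ 0
    · rw [Set.indicator_of_mem (e2.mpr h), if_pos h]
    · rw [Set.indicator_of_notMem (fun hm => h (e2.mp hm)), if_neg h]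
  have v3 : ind {x : Euc d | ∀ j, j ≠ a → 0 ≤ b.repr x j} x =
      if (∀ j, j ≠ a → 0 ≤ b.repr x j) then 1 else 0 := by
    simp only [ind]
    by_cases h : ∀ j, j ≠ a → 0 ≤ b.repr x j
    · rw [Set.indicator_of_mem (show x ∈ {x : Euc d | ∀ j, j ≠ a → 0 ≤ b.repr x j} from h),
        if_pos h]
    · rw [Set.indicator_of_notMem
        (show x ∉ {x : Euc d | ∀ j, j ≠ a → 0 ≤ b.repr x j} from h), if_neg h]
  rw [v1, v2, v3]
  by_cases hP : ∀ j, j ≠ a → 0 ≤ b.repr x j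
  · rw [if_pos hP]
    rcases hr.lt_or_gt with hlt | hgt
    · rw [if_neg (fun h : ∀ j, 0 ≤ b.repr x j => absurd (h a) (not_le.2 hlt)),
        if_pos ⟨hP, hlt.le⟩]
      norm_num
    · rw [if_pos (fun j => ?_), if_neg (fun h => absurd h.2 (not_le.2 hgt))]
      · norm_num
      · by_cases hj : j = a
        · subst hj; exact hgt.le
        · exact hP j hj
  · rw [if_neg hP, if_neg (fun h : ∀ j, 0 ≤ b.repr x j => hP fun j _ => h j),
      if_neg (fun h => hP h.1)]
    norm_num

lemma isLineCone_univ {d : ℕ} (hd : 0 < d) : IsLineCone (Set.univ : Set (Euc d)) := by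
  constructor
  · refine ⟨1, fun _ => Set.univ, fun _ => ⟨0, Fin.elim0, Fin.elim0, fun i => i.elim0, ?_⟩,
      by rw [Set.iUnion_const]⟩
    ext x; simp
  · refine ⟨EuclideanSpace.single ⟨0, hd⟩ 1, fun h => ?_, fun t => ?_⟩
    · have := congrArg (fun f : Euc d => f ⟨0, hd⟩) h
      simp at this
    · apply Set.eq_univ_of_forall
      intro x
      exact ⟨x - t • EuclideanSpace.single ⟨0, hd⟩ 1, Set.mem_univ _, by module⟩

lemma flip_finset {d : ℕ} (w : Fin d → Euc d) (hw : LinearIndependent ℝ w)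
    (s : Finset (Fin d)) :
    ∃ (ε : ℝ) (εc : Fin d → ℝ) (D : Fin d → Set (Euc d)),
      (ε = 1 ∨ ε = -1) ∧ (∀ i, εc i = -1 ∨ εc i = 0 ∨ εc i = 1) ∧
      (∀ i, i ∉ s → εc i = 0) ∧ (∀ i, IsLineCone (D i)) ∧
      ind (posCone w) =ᵐ[volume] fun x =>
        ε * ind (posCone fun j => if j ∈ s then -w j else w j) x +
        ∑ i, εc i * ind (D i) x := by
  classical
  induction s using Finset.induction_on with
  | empty =>
    refine ⟨1, fun _ => 0, fun _ => Set.univ, Or.inl rfl, fun i => Or.inr (Or.inl rfl),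
      fun _ _ => rfl, fun i => isLineCone_univ i.pos, ?_⟩
    apply Filter.EventuallyEq.of_eq
    funext x
    simp
  | @insert a s ha IH =>
    obtain ⟨ε, εc, D, hε, hεc, hεc0, hD, hae⟩ := IH
    set us : Fin d → Euc d := fun j => if j ∈ s then -w j else w j with husdef
    have hus : LinearIndependent ℝ us := by
      have h := hw.units_smul (fun j => if j ∈ s then -1 else 1)
      convert h using 1
      funext j
      by_cases hj : j ∈ s <;> simp [husdef, hj, Units.smul_def]
    obtain ⟨D', hD', hae'⟩ := flip_one us hus a
    have hupd : Function.update us a (-(us a)) =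
        fun j => if j ∈ insert a s then -w j else w j := by
      funext j
      by_cases hj : j = a
      · subst hj
        simp [Function.update_self, husdef, ha]
      · simp [Function.update_of_ne hj, husdef, Finset.mem_insert, hj]
    rw [hupd] at hae'
    refine ⟨-ε, Function.update εc a ε, Function.update D a D', ?_, ?_, ?_, ?_, ?_⟩
    · rcases hε with h | h <;> simp [h]
    · intro i
      by_cases hi : i = a
      · subst hi; simp only [Function.update_self]; tauto
      · rw [Function.update_of_ne hi]; exact hεc i
    · intro i hi
      have hi' : i ≠ a := fun h => hi (h ▸ Finset.mem_insert_self a s)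
      rw [Function.update_of_ne hi']
      exact hεc0 i (fun h => hi (Finset.mem_insert_of_mem h))
    · intro i
      by_cases hi : i = a
      · subst hi; simpa using hD'
      · rw [Function.update_of_ne hi]; exact hD i
    · filter_upwards [hae, hae'] with x hx1 hx2
      rw [hx1, hx2]
      have hsum : ∑ i, Function.update εc a ε i * ind (Function.update D a D' i) x
          = ε * ind D' x + ∑ i, εc i * ind (D i) x := by
        rw [Fintype.sum_eq_add_sum_compl a, Fintype.sum_eq_add_sum_compl a
          (fun i => εc i * ind (D i) x)]
        simp only [Function.update_self, hεc0 a ha, zero_mul, zero_add]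
        congr 1
        refine Finset.sum_congr rfl fun i hi => ?_
        have hi' : i ≠ a := by simpa using hi
        rw [Function.update_of_ne hi', Function.update_of_ne hi']
      rw [hsum]
      ring

/-- Flipping the generators of a simplicial cone to one side of a
hyperplane changes its indicator function only by a sign and a `{-1,0,1}`-combination of
indicator functions of line-cones, almost everywhere. -/
theorem statement_12 {d : ℕ} (w : Fin d → Euc d) (hw : LinearIndependent ℝ w)
    (v : Euc d) (hv : ∀ j, ⟪v, w j⟫ ≠ 0) :
    ∃ (ε : ℝ) (εc : Fin d → ℝ) (D : Fin d → Set (Euc d)),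
      (ε = 1 ∨ ε = -1) ∧ (∀ i, εc i = -1 ∨ εc i = 0 ∨ εc i = 1) ∧
      (∀ i, IsLineCone (D i)) ∧
      ind (posCone w) =ᵐ[volume] fun x =>
        ε * ind (posCone fun j => if 0 < ⟪v, w j⟫ then w j else -w j) x +
        ∑ i, εc i * ind (D i) x := by
  classical
  obtain ⟨ε, εc, D, hε, hεc, _, hD, hae⟩ :=
    flip_finset w hw (Finset.univ.filter fun j => ⟪v, w j⟫ < 0)
  refine ⟨ε, εc, D, hε, hεc, hD, ?_⟩
  have h : (fun j => if j ∈ Finset.univ.filter (fun j => ⟪v, w j⟫ < 0) then -w j else w j)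
      = fun j => if 0 < ⟪v, w j⟫ then w j else -w j := by
    funext j
    rcases (hv j).lt_or_gt with h | h
    · have hm : j ∈ Finset.univ.filter (fun j => ⟪v, w j⟫ < 0) :=
        Finset.mem_filter.2 ⟨Finset.mem_univ j, h⟩
      rw [if_pos hm, if_neg (not_lt.2 h.le)]
    · have hm : j ∉ Finset.univ.filter (fun j => ⟪v, w j⟫ < 0) := by
        intro hm
        exact not_lt.2 h.le (Finset.mem_filter.1 hm).2
      rw [if_neg hm, if_pos h]
  rw [h] at hae
  exact hae
end
end

section
/- Let v_1, …, v_n be distinct points of ℝ^d. For each i let F_i be a finite real linear combination of functions of the form z ↦ |det(w_1,…,w_d)| / ∏_{j=1}^d ⟨w_j, z⟩ with w_1, …, w_d ∈ ℝ^d linearly independent, and assume F_i does not vanish identically on the (dense open) set where it is defined. Let α_1, …, α_n ∈ ℝ. If ∑_{i=1}^n α_i · e^{⟨v_i, z⟩} · F_i(z) = 0 for every z ∈ ℝ^d at which all the functions F_1, …, F_n are defined, then α_1 = ⋯ = α_n = 0. -/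
open MeasureTheory Filter Topology RealInnerProductSpace

noncomputable section

/-- The `d × d` matrix whose columns are the vectors `w 0, …, w (d-1)`. -/
def colMat {d : ℕ} (w : Fin d → Euc d) : Matrix (Fin d) (Fin d) ℝ :=
  Matrix.of fun i j => w j i

noncomputable def linForm {d : ℕ} (w : Euc d) : MvPolynomial (Fin d) ℝ :=
  ∑ j, MvPolynomial.C (w j) * MvPolynomial.X j

lemma eval_linForm {d : ℕ} (w z : Euc d) :
    MvPolynomial.eval z (linForm w) = ⟪w, z⟫ := by
  simp [linForm, PiLp.inner_apply, RCLike.inner_apply, conj_trivial]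
  exact Finset.sum_congr rfl fun _ _ => mul_comm _ _

lemma linForm_ne_zero {d : ℕ} {w : Euc d} (hw : w ≠ 0) : linForm w ≠ 0 := by
  intro h
  apply hw
  have := eval_linForm w w
  rw [h] at this
  simp at this
  exact norm_eq_zero.mp ((pow_eq_zero_iff two_ne_zero).mp this.symm)

noncomputable def expChar (b : ℝ) : Multiplicative ℝ →* ℝ where
  toFun t := Real.exp (b * t.toAdd)
  map_one' := by simp
  map_mul' x y := by simp [toAdd_mul, mul_add, Real.exp_add]

lemma expChar_injective : Function.Injective expChar := by
  intro b b' h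
  have := DFunLike.congr_fun h (Multiplicative.ofAdd 1)
  simpa [expChar, Real.exp_eq_exp] using this

/-- linear independence of exponentials with distinct frequencies -/
lemma exp_lin_indep {n : ℕ} (b : Fin n → ℝ) (hb : Function.Injective b) (β : Fin n → ℝ)
    (h : ∀ t : ℝ, ∑ i, β i * Real.exp (b i * t) = 0) : ∀ i, β i = 0 := by
  have hli : LinearIndependent ℝ fun i : Fin n => ((expChar (b i)) : Multiplicative ℝ → ℝ) :=
    (linearIndependent_monoidHom (Multiplicative ℝ) ℝ).comp (fun i => expChar (b i))
      (expChar_injective.comp hb)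
  refine Fintype.linearIndependent_iff.mp hli β ?_
  funext t
  simpa [expChar, Finset.sum_apply] using h t.toAdd

lemma aux1 (a b P R : ℝ) (hP : P ≠ 0) : a * (b / P) * (P * R) = a * b * R := by
  field_simp

lemma aux2 (a b u P : ℝ) (hu : u ≠ 0) (hP : P ≠ 0) :
    a * (b / (u * P)) = u⁻¹ * (a * (b / P)) := by
  field_simp

lemma aux3 (a S E u : ℝ) (hu : u ≠ 0) : (a * S) * E = u * (a * E * (u⁻¹ * S)) := by
  field_simp


/-- Exponentials with distinct frequencies times nonvanishing rational
functions of the given form are linearly independent. -/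
theorem statement_14 {d : ℕ} (N : ℕ) (v : Fin N → Euc d) (hv : Function.Injective v)
    (m : Fin N → ℕ) (c : ∀ i, Fin (m i) → ℝ) (w : ∀ i, Fin (m i) → Fin d → Euc d)
    (hw : ∀ i k, LinearIndependent ℝ (w i k))
    (hF : ∀ i, ∃ z : Euc d, (∀ k j, ⟪w i k j, z⟫ ≠ 0) ∧
      ∑ k, c i k * (|(colMat (w i k)).det| / ∏ j, ⟪w i k j, z⟫) ≠ 0)
    (α : Fin N → ℝ)
    (h0 : ∀ z : Euc d, (∀ i k j, ⟪w i k j, z⟫ ≠ 0) →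
      ∑ i, α i * Real.exp ⟪v i, z⟫ *
        (∑ k, c i k * (|(colMat (w i k)).det| / ∏ j, ⟪w i k j, z⟫)) = 0) :
    ∀ i, α i = 0 := by
  classical
  set Np : Fin N → MvPolynomial (Fin d) ℝ := fun i =>
    ∑ k, MvPolynomial.C (c i k * |(colMat (w i k)).det|) *
      ∏ k' ∈ Finset.univ.erase k, ∏ j, linForm (w i k' j) with hNp
  have keyEval : ∀ (i : Fin N) (z : Euc d), (∀ k j, ⟪w i k j, z⟫ ≠ 0) →
      MvPolynomial.eval z (Np i) =
        (∑ k, c i k * (|(colMat (w i k)).det| / ∏ j, ⟪w i k j, z⟫)) *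
          ∏ k, ∏ j, ⟪w i k j, z⟫ := by
    intro i z hz
    have hP : ∀ k : Fin (m i), (∏ j, ⟪w i k j, z⟫) ≠ 0 := fun k =>
      Finset.prod_ne_zero_iff.mpr fun j _ => hz k j
    rw [hNp, map_sum, Finset.sum_mul]
    refine Finset.sum_congr rfl fun k _ => ?_
    rw [map_mul, MvPolynomial.eval_C, MvPolynomial.eval_prod]
    simp_rw [MvPolynomial.eval_prod, eval_linForm]
    rw [← Finset.mul_prod_erase Finset.univ _ (Finset.mem_univ k)]
    exact (aux1 _ _ _ _ (hP k)).symm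
  have hNp_ne : ∀ i, Np i ≠ 0 := by
    intro i h
    obtain ⟨z₀, hz₀, hF₀⟩ := hF i
    have h1 := keyEval i z₀ hz₀
    rw [h, map_zero] at h1
    rcases mul_eq_zero.mp h1.symm with h2 | h2
    · exact hF₀ h2
    · exact (Finset.prod_ne_zero_iff.mpr fun k _ =>
        Finset.prod_ne_zero_iff.mpr fun j _ => hz₀ k j) h2
  have hwne : ∀ i k j, w i k j ≠ 0 := fun i k j => (hw i k).ne_zero j
  set Q : MvPolynomial (Fin d) ℝ :=
    (∏ i, Np i) * (∏ i, ∏ k, ∏ j, linForm (w i k j)) *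
      ∏ p ∈ Finset.univ.offDiag, linForm (v p.1 - v p.2) with hQ
  have hQne : Q ≠ 0 := by
    refine mul_ne_zero (mul_ne_zero ?_ ?_) ?_
    · exact Finset.prod_ne_zero_iff.mpr fun i _ => hNp_ne i
    · exact Finset.prod_ne_zero_iff.mpr fun i _ =>
        Finset.prod_ne_zero_iff.mpr fun k _ =>
          Finset.prod_ne_zero_iff.mpr fun j _ => linForm_ne_zero (hwne i k j)
    · refine Finset.prod_ne_zero_iff.mpr fun p hp => ?_
      exact linForm_ne_zero (sub_ne_zero.mpr fun h => (Finset.mem_offDiag.mp hp).2.2 (hv h))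
  obtain ⟨z, hzQ⟩ : ∃ z : Euc d, MvPolynomial.eval z Q ≠ 0 := by
    by_contra h
    push_neg at h
    exact hQne (MvPolynomial.funext fun x => (h (WithLp.toLp 2 x)).trans (map_zero _).symm)
  simp only [hQ, map_mul, MvPolynomial.eval_prod, eval_linForm, mul_ne_zero_iff,
    Finset.prod_ne_zero_iff] at hzQ
  obtain ⟨⟨hzN, hzw'⟩, hzv⟩ := hzQ
  have hzw : ∀ i k j, ⟪w i k j, z⟫ ≠ 0 := fun i k j =>
    hzw' i (Finset.mem_univ i) k (Finset.mem_univ k) j (Finset.mem_univ j)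
  -- key scaling identity
  have hkey : ∀ t : ℝ, t ≠ 0 →
      ∑ i, (α i * ∑ k, c i k * (|(colMat (w i k)).det| / ∏ j, ⟪w i k j, z⟫)) *
        Real.exp (⟪v i, z⟫ * t) = 0 := by
    intro t ht
    have hzt : ∀ i k j, ⟪w i k j, t • z⟫ ≠ 0 := fun i k j => by
      rw [real_inner_smul_right]; exact mul_ne_zero ht (hzw i k j)
    have h := h0 (t • z) hzt
    have htd : (t : ℝ) ^ d ≠ 0 := pow_ne_zero _ ht
    have hFt : ∀ i, (∑ k, c i k * (|(colMat (w i k)).det| / ∏ j, ⟪w i k j, t • z⟫))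
        = (t ^ d)⁻¹ * ∑ k, c i k * (|(colMat (w i k)).det| / ∏ j, ⟪w i k j, z⟫) := by
      intro i
      rw [Finset.mul_sum]
      refine Finset.sum_congr rfl fun k _ => ?_
      have hprod : (∏ j, ⟪w i k j, t • z⟫) = t ^ d * ∏ j, ⟪w i k j, z⟫ := by
        simp_rw [real_inner_smul_right]
        rw [Finset.prod_mul_distrib, Finset.prod_const, Finset.card_univ, Fintype.card_fin]
      rw [hprod]
      exact aux2 _ _ _ _ htd (Finset.prod_ne_zero_iff.mpr fun j _ => hzw i k j)
    have hvz : ∀ i : Fin N, ⟪v i, t • z⟫ = ⟪v i, z⟫ * t := fun i => by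
      rw [real_inner_smul_right]; ring
    simp_rw [hFt, hvz] at h
    calc ∑ i, (α i * ∑ k, c i k * (|(colMat (w i k)).det| / ∏ j, ⟪w i k j, z⟫)) *
          Real.exp (⟪v i, z⟫ * t)
        = t ^ d * ∑ i, α i * Real.exp (⟪v i, z⟫ * t) *
            ((t ^ d)⁻¹ * ∑ k, c i k * (|(colMat (w i k)).det| / ∏ j, ⟪w i k j, z⟫)) := by
          rw [Finset.mul_sum]
          exact Finset.sum_congr rfl fun i _ => aux3 _ _ _ _ htd
      _ = 0 := by rw [h, mul_zero]
  -- extend to t = 0 by continuity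
  have hall : ∀ t : ℝ,
      ∑ i, (α i * ∑ k, c i k * (|(colMat (w i k)).det| / ∏ j, ⟪w i k j, z⟫)) *
        Real.exp (⟪v i, z⟫ * t) = 0 := by
    intro t
    rcases eq_or_ne t 0 with rfl | ht
    · have hcont : Continuous fun t : ℝ =>
          ∑ i, (α i * ∑ k, c i k * (|(colMat (w i k)).det| / ∏ j, ⟪w i k j, z⟫)) *
            Real.exp (⟪v i, z⟫ * t) := by
        refine continuous_finset_sum _ fun i _ => Continuous.mul continuous_const ?_
        exact Real.continuous_exp.comp (continuous_const.mul continuous_id)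
      have h1 := (hcont.tendsto 0).mono_left (nhdsWithin_le_nhds (s := {(0:ℝ)}ᶜ))
      have h2 : Filter.Tendsto (fun t : ℝ =>
          ∑ i, (α i * ∑ k, c i k * (|(colMat (w i k)).det| / ∏ j, ⟪w i k j, z⟫)) *
            Real.exp (⟪v i, z⟫ * t)) (𝓝[≠] 0) (𝓝 0) := by
        refine Filter.Tendsto.congr' ?_ tendsto_const_nhds
        filter_upwards [self_mem_nhdsWithin] with t ht using (hkey t ht).symm
      exact tendsto_nhds_unique h1 h2
    · exact hkey t ht
  have hb : Function.Injective fun i : Fin N => ⟪v i, z⟫ := by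
    intro i i' h
    by_contra hne
    have h3 := hzv (i, i') (Finset.mem_offDiag.mpr ⟨Finset.mem_univ _, Finset.mem_univ _, hne⟩)
    exact h3 (by simp only [inner_sub_left]; exact sub_eq_zero_of_eq h)
  have hind := exp_lin_indep (fun i => ⟪v i, z⟫) hb
    (fun i => α i * ∑ k, c i k * (|(colMat (w i k)).det| / ∏ j, ⟪w i k j, z⟫)) hall
  intro i
  have hFi : (∑ k, c i k * (|(colMat (w i k)).det| / ∏ j, ⟪w i k j, z⟫)) ≠ 0 :=
    left_ne_zero_of_mul (ne_of_eq_of_ne (keyEval i z (hzw i)).symm (hzN i (Finset.mem_univ i)))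
  exact (mul_eq_zero.mp (hind i)).resolve_right hFi
end
end

section
/- Let v_1, …, v_n be distinct points of ℝ^d. For each i let F_i be a finite real linear combination of functions of the form z ↦ c / ∏_{j=1}^d ⟨w_j, z⟩ with c ∈ ℝ and w_1, …, w_d nonzero vectors in ℝ^d. If ∑_{i=1}^n e^{⟨v_i, z⟩} · F_i(z) = 0 for every z ∈ ℝ^d at which all the functions F_1, …, F_n are defined (this is a dense open set), then each F_i vanishes identically on its domain of definition. -/
open MeasureTheory Filter Topology RealInnerProductSpace

noncomputable section

/-- exp as monoid hom from Multiplicative ℝ -/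
def expHom (a : ℝ) : Multiplicative ℝ →* ℝ where
  toFun t := Real.exp (a * t.toAdd)
  map_one' := by simp
  map_mul' x y := by
    simp [mul_add, Real.exp_add]

lemma expHom_inj : Function.Injective expHom := by
  intro a a' h
  have := congrFun (congrArg (fun f : Multiplicative ℝ →* ℝ => (f : Multiplicative ℝ → ℝ)) h)
    (Multiplicative.ofAdd 1)
  simpa [expHom, Real.exp_eq_exp] using this

lemma zero_of_dense {X : Type*} [TopologicalSpace X] {f : X → ℝ} {s : Set X} {x : X}
    (hx : x ∈ closure s) (hc : ContinuousAt f x) (h : ∀ y ∈ s, f y = 0) : f x = 0 := by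
  have hne : (𝓝[s] x).NeBot := mem_closure_iff_nhdsWithin_neBot.mp hx
  have h1 : Tendsto f (𝓝[s] x) (𝓝 (f x)) := hc.tendsto.mono_left nhdsWithin_le_nhds
  have h2 : Tendsto f (𝓝[s] x) (𝓝 0) := by
    refine Tendsto.congr' ?_ tendsto_const_nhds
    filter_upwards [self_mem_nhdsWithin] with y hy using (h y hy).symm
  exact tendsto_nhds_unique h1 h2

lemma exp_indep {n : ℕ} (a : Fin n → ℝ) (ha : Function.Injective a) (b : Fin n → ℝ)
    (hb : ∀ t : ℝ, t ≠ 0 → ∑ i, b i * Real.exp (a i * t) = 0) : ∀ i, b i = 0 := by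
  have hall : ∀ t : ℝ, ∑ i, b i * Real.exp (a i * t) = 0 := by
    intro t
    rcases eq_or_ne t 0 with rfl | ht
    · have hcl : (0:ℝ) ∈ closure {t : ℝ | t ≠ 0} := by
        have : Dense {t : ℝ | t ≠ 0} := dense_compl_singleton 0
        exact this 0
      exact zero_of_dense (f := fun t : ℝ => ∑ i, b i * Real.exp (a i * t)) hcl
        (by fun_prop) (fun y hy => hb y hy)
    · exact hb t ht
  have li : LinearIndependent ℝ (fun i : Fin n => ((expHom (a i)) : Multiplicative ℝ → ℝ)) :=
    (linearIndependent_monoidHom (Multiplicative ℝ) ℝ).comp (fun i => expHom (a i))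
      (expHom_inj.comp ha)
  refine Fintype.linearIndependent_iff.mp li b ?_
  funext t
  simpa [expHom] using hall t.toAdd

lemma dense_inner_ne {d : ℕ} {ι : Type*} [Countable ι] (u : ι → Euc d) (hu : ∀ i, u i ≠ 0) :
    Dense {z : Euc d | ∀ i, ⟪u i, z⟫ ≠ 0} := by
  have : {z : Euc d | ∀ i, ⟪u i, z⟫ ≠ 0} = ⋂ i, {z | ⟪u i, z⟫ ≠ 0} := by
    ext; simp
  rw [this]
  refine dense_iInter_of_isOpen (fun i => ?_) (fun i => ?_)
  · exact isOpen_compl_iff.mpr (isClosed_eq (continuous_const.inner continuous_id) continuous_const)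
  · rw [Metric.dense_iff]
    intro x r hr
    rcases eq_or_ne ⟪u i, x⟫ 0 with h | h
    · refine ⟨x + (r / (2 * ‖u i‖)) • u i, ?_, ?_⟩
      · rw [Metric.mem_ball, dist_self_add_left, norm_smul]
        have hn : 0 < ‖u i‖ := norm_pos_iff.mpr (hu i)
        rw [Real.norm_eq_abs, abs_of_pos (by positivity)]
        rw [div_mul_eq_mul_div, mul_comm]
        calc ‖u i‖ * r / (2 * ‖u i‖) = r / 2 := by field_simp
        _ < r := by linarith
      · simp only [Set.mem_setOf_eq, inner_add_right, h, real_inner_smul_right, zero_add]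
        have hn : 0 < ‖u i‖ := norm_pos_iff.mpr (hu i)
        have : ⟪u i, u i⟫ = ‖u i‖ ^ 2 := real_inner_self_eq_norm_sq (u i)
        rw [this]
        positivity
    · exact ⟨x, Metric.mem_ball_self hr, h⟩

/-- If a sum of exponentials with distinct frequencies times rational
functions of the given form vanishes wherever all the rational functions are defined,
then each rational function vanishes identically on its domain. -/
theorem statement_15 {d : ℕ} (N : ℕ) (v : Fin N → Euc d) (hv : Function.Injective v)
    (m : Fin N → ℕ) (c : ∀ i, Fin (m i) → ℝ) (w : ∀ i, Fin (m i) → Fin d → Euc d)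
    (hw : ∀ i k j, w i k j ≠ 0)
    (h0 : ∀ z : Euc d, (∀ i k j, ⟪w i k j, z⟫ ≠ 0) →
      ∑ i, Real.exp ⟪v i, z⟫ * (∑ k, c i k / ∏ j, ⟪w i k j, z⟫) = 0) :
    ∀ i, ∀ z : Euc d, (∀ k j, ⟪w i k j, z⟫ ≠ 0) →
      ∑ k, c i k / ∏ j, ⟪w i k j, z⟫ = 0 := by
  classical
  set F : Fin N → Euc d → ℝ := fun i z => ∑ k, c i k / ∏ j, ⟪w i k j, z⟫ with hF
  let ι := (Σ i : Fin N, Fin (m i) × Fin d) ⊕ {p : Fin N × Fin N // p.1 ≠ p.2}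
  let u : ι → Euc d := fun x => match x with
    | .inl ⟨i, k, j⟩ => w i k j
    | .inr ⟨(i, i'), _⟩ => v i - v i'
  have hu : ∀ x, u x ≠ 0 := by
    rintro (⟨i, k, j⟩ | ⟨⟨i, i'⟩, h⟩)
    · exact hw i k j
    · exact sub_ne_zero_of_ne (hv.ne h)
  have hD : Dense {z : Euc d | ∀ x, ⟪u x, z⟫ ≠ 0} := dense_inner_ne u hu
  set D := {z : Euc d | ∀ x, ⟪u x, z⟫ ≠ 0} with hDdef
  have key : ∀ z ∈ D, ∀ i, F i z = 0 := by
    intro z hz i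
    have hzw : ∀ i k j, ⟪w i k j, z⟫ ≠ 0 := fun i k j => hz (.inl ⟨i, k, j⟩)
    have ht0 : ∀ t : ℝ, t ≠ 0 → ∑ i, F i z * Real.exp (⟪v i, z⟫ * t) = 0 := by
      intro t ht
      have htd : (t : ℝ) ^ d ≠ 0 := pow_ne_zero _ ht
      have hz' : ∀ i k j, ⟪w i k j, (t • z : Euc d)⟫ ≠ 0 := by
        intro i k j
        rw [real_inner_smul_right]
        exact mul_ne_zero ht (hzw i k j)
      have h1 := h0 (t • z) hz'
      have per : ∀ i : Fin N,
          t ^ d * (Real.exp ⟪v i, (t • z : Euc d)⟫ *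
            ∑ k, c i k / ∏ j, ⟪w i k j, (t • z : Euc d)⟫)
          = F i z * Real.exp (⟪v i, z⟫ * t) := by
        intro i
        have hprod : ∀ k, (∏ j, ⟪w i k j, (t • z : Euc d)⟫) = t ^ d * ∏ j, ⟪w i k j, z⟫ := by
          intro k
          simp_rw [real_inner_smul_right]
          rw [Finset.prod_mul_distrib, Finset.prod_const]
          simp
        have hsum : (∑ k, c i k / ∏ j, ⟪w i k j, (t • z : Euc d)⟫) = F i z / t ^ d := by
          rw [hF]
          simp only [hprod]
          rw [eq_div_iff htd, Finset.sum_mul]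
          refine Finset.sum_congr rfl fun k _ => ?_
          rw [mul_comm, mul_div_assoc', mul_div_mul_left _ _ htd]
        rw [hsum, real_inner_smul_right, mul_comm t ⟪v i, z⟫]
        field_simp
      calc ∑ i, F i z * Real.exp (⟪v i, z⟫ * t)
          = t ^ d * ∑ i, Real.exp ⟪v i, (t • z : Euc d)⟫ *
              (∑ k, c i k / ∏ j, ⟪w i k j, (t • z : Euc d)⟫) := by
            rw [Finset.mul_sum]
            exact (Finset.sum_congr rfl fun i _ => (per i).symm)
        _ = 0 := by rw [h1, mul_zero]
    have ha : Function.Injective fun i => ⟪v i, z⟫ := by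
      intro i i' h
      by_contra hne
      exact hz (.inr ⟨(i, i'), hne⟩) (by rw [inner_sub_left, sub_eq_zero]; exact h)
    exact exp_indep _ ha _ ht0 i
  intro i z hzdom
  have hPne : ∀ k, (∏ j, ⟪w i k j, z⟫) ≠ 0 := fun k =>
    Finset.prod_ne_zero_iff.mpr fun j _ => hzdom k j
  have hcont : ContinuousAt (F i) z := by
    refine tendsto_finset_sum _ fun k _ => ?_
    exact ContinuousAt.div continuousAt_const
      ((continuous_finset_prod _ fun j _ => continuous_const.inner continuous_id).continuousAt)
      (hPne k)
  exact zero_of_dense (f := F i) (hD z) hcont (fun y hy => key y hy i)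
end
end
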